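/- Let M be a model category with homotopy category functor h : M → Ho(M). If two diagrams F : I → M and G : J → M in diag(M) are related by a span of maps which are open up to homotopy, then F and G are bisimilar up to homotopy, i.e. h∘F and h∘G are bisimilar diagrams in Ho(M). -/

import Mathlib

/- STATEMENT 12: Let M be a model category with homotopy category functor
h : M → Ho(M). If two diagrams F : I ⥤ M and G : J ⥤ M are related by a span of maps
which are open up to homotopy, then F and G are bisimilar up to homotopy, i.e. h∘F and
h∘G are bisimilar diagrams in Ho(M). -/

open CategoryTheory

universe w v u

/-- A retract of a morphism. -/
def IsRetractOf {M : Type u} [Category.{v} M] {X Y X' Y' : M}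
    (f : X ⟶ Y) (f' : X' ⟶ Y') : Prop :=
  ∃ (s : X ⟶ X') (r : X' ⟶ X) (s' : Y ⟶ Y') (r' : Y' ⟶ Y),
    s ≫ r = 𝟙 X ∧ s' ≫ r' = 𝟙 Y ∧ s ≫ f' = f ≫ s' ∧ f' ≫ r' = r ≫ f

/-- A model category structure on a bicomplete category: classes of cofibrations,
fibrations and weak equivalences such that weak equivalences are closed under retracts
and satisfy two-out-of-three, and (cof, weq ∩ fib) and (cof ∩ weq, fib) are weak
factorization systems. -/
class ModelCategory (M : Type u) [Category.{v} M]
    [Limits.HasLimits M] [Limits.HasColimits M] where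
  weq : MorphismProperty M
  cof : MorphismProperty M
  fib : MorphismProperty M
  weq_comp : ∀ {X Y Z : M} (f : X ⟶ Y) (g : Y ⟶ Z), weq f → weq g → weq (f ≫ g)
  weq_of_comp_left : ∀ {X Y Z : M} (f : X ⟶ Y) (g : Y ⟶ Z), weq f → weq (f ≫ g) → weq g
  weq_of_comp_right : ∀ {X Y Z : M} (f : X ⟶ Y) (g : Y ⟶ Z), weq g → weq (f ≫ g) → weq f
  weq_retract : ∀ {X Y X' Y' : M} (f : X ⟶ Y) (f' : X' ⟶ Y'),
    IsRetractOf f f' → weq f' → weq f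
  cof_retract : ∀ {X Y X' Y' : M} (f : X ⟶ Y) (f' : X' ⟶ Y'),
    IsRetractOf f f' → cof f' → cof f
  fib_retract : ∀ {X Y X' Y' : M} (f : X ⟶ Y) (f' : X' ⟶ Y'),
    IsRetractOf f f' → fib f' → fib f
  lift_triv_fib : ∀ {A B X Y : M} (i : A ⟶ B) (p : X ⟶ Y),
    cof i → fib p → weq p → HasLiftingProperty i p
  lift_triv_cof : ∀ {A B X Y : M} (i : A ⟶ B) (p : X ⟶ Y),
    cof i → weq i → fib p → HasLiftingProperty i p
  factor_cof_trivFib : ∀ {X Y : M} (f : X ⟶ Y),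
    ∃ (Z : M) (i : X ⟶ Z) (p : Z ⟶ Y), cof i ∧ fib p ∧ weq p ∧ i ≫ p = f
  factor_trivCof_fib : ∀ {X Y : M} (f : X ⟶ Y),
    ∃ (Z : M) (i : X ⟶ Z) (p : Z ⟶ Y), cof i ∧ weq i ∧ fib p ∧ i ≫ p = f

/-- Openness of a map in `diag(K)`. -/
def IsOpenDiagMap {K : Type*} [Category K] {I : Type*} [Category I] {J : Type*}
    [Category J] (F : I ⥤ K) (G : J ⥤ K) (f : I ⥤ J) (μ : F ⟶ f ⋙ G) : Prop :=
  Function.Surjective f.obj ∧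
    (∀ (i : I) (j' : J) (ψ : f.obj i ⟶ j'),
      ∃ (j : I) (φ : i ⟶ j) (h : f.obj j = j'), f.map φ ≫ eqToHom h = ψ) ∧
    IsIso μ

/-- Bisimilarity of two diagrams. -/
def Bisimilar {K : Type*} [Category K] {I : Type*} [Category I] {J : Type*} [Category J]
    (F : I ⥤ K) (G : J ⥤ K) : Prop :=
  ∃ R : Set ((i : I) × (j : J) × (F.obj i ≅ G.obj j)),
    (∀ i : I, ∃ p ∈ R, p.1 = i) ∧
    (∀ j : J, ∃ p ∈ R, p.2.1 = j) ∧
    (∀ (i : I) (j : J) (η : F.obj i ≅ G.obj j), ⟨i, j, η⟩ ∈ R →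
      ∀ (i' : I) (φ : i ⟶ i'),
        ∃ (j' : J) (η' : F.obj i' ≅ G.obj j') (ψ : j ⟶ j'),
          ⟨i', j', η'⟩ ∈ R ∧ F.map φ ≫ η'.hom = η.hom ≫ G.map ψ) ∧
    (∀ (i : I) (j : J) (η : F.obj i ≅ G.obj j), ⟨i, j, η⟩ ∈ R →
      ∀ (j' : J) (ψ : j ⟶ j'),
        ∃ (i' : I) (η' : F.obj i' ≅ G.obj j') (φ : i ⟶ i'),
          ⟨i', j', η'⟩ ∈ R ∧ F.map φ ≫ η'.hom = η.hom ≫ G.map ψ)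

/-- If the two legs of a span `F ⟵ H ⟶ G` of diagrams in a model category `M` become
open after composing with the homotopy category functor `h = W.Q : M ⥤ Ho(M)`
(localization at the weak equivalences), then `h∘F` and `h∘G` are bisimilar, i.e. `F`
and `G` are bisimilar up to homotopy. -/
theorem bisimilar_up_to_homotopy_of_span_open_up_to_homotopy
    {M : Type u} [Category.{v} M] [Limits.HasLimits M] [Limits.HasColimits M]
    [mc : ModelCategory M]
    {I J L : Type w} [SmallCategory I] [SmallCategory J] [SmallCategory L]
    (F : I ⥤ M) (G : J ⥤ M) (H : L ⥤ M)
    (f : L ⥤ I) (μ : H ⟶ f ⋙ F) (g : L ⥤ J) (ν : H ⟶ g ⋙ G)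
    (hf : IsOpenDiagMap (H ⋙ mc.weq.Q) (F ⋙ mc.weq.Q) f
      (Functor.whiskerRight μ mc.weq.Q ≫ (Functor.associator f F mc.weq.Q).hom))
    (hg : IsOpenDiagMap (H ⋙ mc.weq.Q) (G ⋙ mc.weq.Q) g
      (Functor.whiskerRight ν mc.weq.Q ≫ (Functor.associator g G mc.weq.Q).hom)) :
    Bisimilar (F ⋙ mc.weq.Q) (G ⋙ mc.weq.Q) := by

  obtain ⟨fsurj, flift, fiso⟩ := hf
  obtain ⟨gsurj, glift, giso⟩ := hg
  haveI : IsIso (Functor.whiskerRight μ mc.weq.Q ≫ (Functor.associator f F mc.weq.Q).hom) := fiso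
  haveI : IsIso (Functor.whiskerRight ν mc.weq.Q ≫ (Functor.associator g G mc.weq.Q).hom) := giso
  set α := Functor.whiskerRight μ mc.weq.Q ≫ (Functor.associator f F mc.weq.Q).hom with hα
  set β := Functor.whiskerRight ν mc.weq.Q ≫ (Functor.associator g G mc.weq.Q).hom with hβ
  let η : ∀ l : L, (F ⋙ mc.weq.Q).obj (f.obj l) ≅ (G ⋙ mc.weq.Q).obj (g.obj l) :=
    fun l => (asIso (α.app l)).symm ≪≫ asIso (β.app l)
  have square : ∀ {l l' : L} (φL : l ⟶ l'),
      (F ⋙ mc.weq.Q).map (f.map φL) ≫ (η l').hom =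
        (η l).hom ≫ (G ⋙ mc.weq.Q).map (g.map φL) := by
    intro l l' φL
    have nα : (H ⋙ mc.weq.Q).map φL ≫ α.app l' =
        α.app l ≫ (F ⋙ mc.weq.Q).map (f.map φL) := α.naturality φL
    have nβ : (H ⋙ mc.weq.Q).map φL ≫ β.app l' =
        β.app l ≫ (G ⋙ mc.weq.Q).map (g.map φL) := β.naturality φL
    simp only [η, Iso.trans_hom, Iso.symm_hom, asIso_inv, asIso_hom]
    rw [eq_comm, Category.assoc, IsIso.inv_comp_eq, ← nβ, ← Category.assoc, ← Category.assoc, ← nα]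
    simp
  refine ⟨Set.range (fun l : L => ⟨f.obj l, g.obj l, η l⟩), ?_, ?_, ?_, ?_⟩
  · intro i
    obtain ⟨l, rfl⟩ := fsurj i
    exact ⟨⟨f.obj l, g.obj l, η l⟩, ⟨l, rfl⟩, rfl⟩
  · intro j
    obtain ⟨l, rfl⟩ := gsurj j
    exact ⟨⟨f.obj l, g.obj l, η l⟩, ⟨l, rfl⟩, rfl⟩
  · rintro i j e ⟨l, hl⟩ i' φ
    obtain ⟨h1, h2⟩ := Sigma.mk.inj_iff.mp hl
    subst h1
    obtain ⟨h2, h3⟩ := Sigma.mk.inj_iff.mp (eq_of_heq h2)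
    subst h2
    have h3' := eq_of_heq h3
    subst h3'
    obtain ⟨l', φL, hE, hcomm⟩ := flift l i' φ
    subst hE
    simp only [eqToHom_refl, Category.comp_id] at hcomm
    subst hcomm
    exact ⟨g.obj l', η l', g.map φL, ⟨l', rfl⟩, square φL⟩
  · rintro i j e ⟨l, hl⟩ j' ψ
    obtain ⟨h1, h2⟩ := Sigma.mk.inj_iff.mp hl
    subst h1
    obtain ⟨h2, h3⟩ := Sigma.mk.inj_iff.mp (eq_of_heq h2)
    subst h2
    have h3' := eq_of_heq h3
    subst h3'
    obtain ⟨l', φL, hE, hcomm⟩ := glift l j' ψ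
    subst hE
    simp only [eqToHom_refl, Category.comp_id] at hcomm
    subst hcomm
    exact ⟨f.obj l', η l', f.map φL, ⟨l', rfl⟩, square φL⟩
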